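/- Let (X,σ) be a magnetic graph with σ taking values in S¹_p, and X̂ its lift. Then the compression map 𝒞: AE(X̂) → AE_σ(X), (𝒞m)(u) = Σ_{ξ∈S¹_p} ξ m(u,ξ), is a contraction: ‖𝒞m‖_{AE_σ} ≤ ‖m‖_{AE} for all m ∈ AE(X̂). -/

import Mathlib

namespace MagneticGraph

variable {V : Type*}

/-- `σ` is a signature on `G`: unimodular on edges and conjugate-symmetric. -/
def IsSignature (G : SimpleGraph V) (σ : V → V → ℂ) : Prop :=
  ∀ u v, G.Adj u v → ‖σ u v‖ = 1 ∧ σ v u = starRingEnd ℂ (σ u v)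

/-- Product of the signature along (the darts of) a walk. -/
def sigProd {G : SimpleGraph V} (σ : V → V → ℂ) {u v : V} (w : G.Walk u v) : ℂ :=
  (w.darts.map fun d => σ d.toProd.1 d.toProd.2).prod

/-- `(X,σ)` is unbalanced: some directed cycle has signature product `≠ 1`. -/
def Unbalanced (G : SimpleGraph V) (σ : V → V → ℂ) : Prop :=
  ∃ (u : V) (w : G.Walk u u), w.IsCycle ∧ sigProd σ w ≠ 1

/-- `(X,σ)` is balanced: every directed cycle has signature product `1`. -/
def Balanced (G : SimpleGraph V) (σ : V → V → ℂ) : Prop :=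
  ∀ (u : V) (w : G.Walk u u), w.IsCycle → sigProd σ w = 1

/-- The σ-Lipschitz (semi)norm `max_{u∼v} |f(u) - σ_{uv} f(v)|`. -/
noncomputable def lipNorm (G : SimpleGraph V) (σ : V → V → ℂ) (f : V → ℂ) : ℝ :=
  sSup {r : ℝ | ∃ u v, G.Adj u v ∧ r = ‖f u - σ u v * f v‖}

/-- The magnetic atom `m^σ_{uv} = δ_u - σ_{uv} δ_v`. -/
def atom [DecidableEq V] (σ : V → V → ℂ) (u v : V) : V → ℂ :=
  fun w => (if w = u then (1 : ℂ) else 0) - σ u v * (if w = v then (1 : ℂ) else 0)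

/-- Membership in the magnetic Arens–Eells space: a finite linear combination of atoms. -/
def InAE [DecidableEq V] (G : SimpleGraph V) (σ : V → V → ℂ) (m : V → ℂ) : Prop :=
  ∃ (n : ℕ) (a : Fin n → ℂ) (p q : Fin n → V),
    (∀ i, G.Adj (p i) (q i)) ∧ m = ∑ i, a i • atom σ (p i) (q i)

/-- The magnetic Arens–Eells norm: infimum of `Σ|aᵢ|` over representations by atoms. -/
noncomputable def aeNorm [DecidableEq V] (G : SimpleGraph V) (σ : V → V → ℂ) (m : V → ℂ) : ℝ :=
  sInf {s : ℝ | ∃ (n : ℕ) (a : Fin n → ℂ) (p q : Fin n → V),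
    (∀ i, G.Adj (p i) (q i)) ∧ m = ∑ i, a i • atom σ (p i) (q i) ∧
    s = ∑ i, ‖a i‖}

/-- The lift graph of `(X,σ)` on vertex set `V × S¹_p`: `(u,ω) ∼ (v,ω')` iff
`u ∼ v` and `ω' = ω σ_{uv}`. -/
def liftGraph (G : SimpleGraph V) (σ : V → V → ℂ) (p : ℕ) :
    SimpleGraph (V × rootsOfUnity p ℂ) :=
  SimpleGraph.fromRel fun a b =>
    G.Adj a.1 b.1 ∧ ((b.2 : ℂˣ) : ℂ) = ((a.2 : ℂˣ) : ℂ) * σ a.1 b.1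

/-- The trivial signature. -/
def triv {W : Type*} : W → W → ℂ := fun _ _ => 1

/-- The compression map `(𝒞 m)(u) = Σ_{ξ ∈ S¹_p} ξ · m(u,ξ)`. -/
noncomputable def compress {V : Type*} (p : ℕ) [NeZero p] (m : V × rootsOfUnity p ℂ → ℂ) : V → ℂ :=
  fun u => haveI := Fintype.ofFinite (rootsOfUnity p ℂ); ∑ ξ : rootsOfUnity p ℂ, ((ξ : ℂˣ) : ℂ) * m (u, ξ)

/-- compress is additive over finite sums. -/
lemma compress_sum {V : Type*} (p : ℕ) [NeZero p] {n : ℕ}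
    (f : Fin n → (V × rootsOfUnity p ℂ → ℂ)) :
    compress p (∑ i, f i) = ∑ i, compress p (f i) := by
  funext u
  simp only [compress, Finset.sum_apply, Finset.mul_sum]
  exact Finset.sum_comm

lemma compress_smul {V : Type*} (p : ℕ) [NeZero p] (a : ℂ)
    (f : V × rootsOfUnity p ℂ → ℂ) :
    compress p (a • f) = a • compress p f := by
  funext u
  simp only [compress, Pi.smul_apply, smul_eq_mul, Finset.mul_sum]
  congr 1; funext ξ; ring

lemma compress_atom {V : Type*} [DecidableEq V] (p : ℕ) [NeZero p]
    (u v : V) (ω ω' : rootsOfUnity p ℂ) :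
    compress p (atom triv (u, ω) (v, ω')) =
      fun w => (if w = u then ((ω : ℂˣ) : ℂ) else 0) -
        (if w = v then ((ω' : ℂˣ) : ℂ) else 0) := by
  funext w
  simp only [compress, atom, triv, one_mul, mul_sub, Prod.mk.injEq, Finset.sum_sub_distrib]
  congr 1
  · by_cases h : w = u
    · subst h
      rw [Finset.sum_eq_single ω]
      · simp
      · intro b _ hb; simp [hb]
      · simp
    · simp [h]
  · by_cases h : w = v
    · subst h
      rw [Finset.sum_eq_single ω']
      · simp
      · intro b _ hb; simp [hb]
      · simp
    · simp [h]

lemma abs_root {p : ℕ} [NeZero p] (ω : rootsOfUnity p ℂ) :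
    ‖((ω : ℂˣ) : ℂ)‖ = 1 := by
  have h : ((ω : ℂˣ) : ℂ) ^ p = 1 := by
    have h2 := ω.2
    rw [mem_rootsOfUnity] at h2
    have := congrArg (Units.val) h2
    push_cast at this
    exact this
  exact Complex.norm_eq_one_of_pow_eq_one h (NeZero.ne p)


lemma key1 {V : Type*} [DecidableEq V] (σ : V → V → ℂ) {u v : V} {ω ω' : ℂ}
    (h2 : ω' = ω * σ u v) :
    (fun w => (if w = u then ω else 0) - (if w = v then ω' else 0)) = ω • atom σ u v := by
  funext w
  simp only [atom, Pi.smul_apply, smul_eq_mul, h2]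
  split_ifs <;> ring

lemma key2 {V : Type*} [DecidableEq V] (σ : V → V → ℂ) {u v : V} {ω ω' : ℂ}
    (h2 : ω = ω' * σ v u) :
    (fun w => (if w = u then ω else 0) - (if w = v then ω' else 0)) = (-ω') • atom σ v u := by
  funext w
  simp only [atom, Pi.smul_apply, smul_eq_mul, h2]
  split_ifs <;> ring

/-- the compression map is a contraction:
`‖𝒞 m‖_{AE_σ} ≤ ‖m‖_{AE}` for every `m ∈ AE(X̂)`. -/
theorem stmt10 {V : Type*} [Fintype V] [DecidableEq V] (G : SimpleGraph V) (σ : V → V → ℂ)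
    (p : ℕ) [NeZero p] (hσ : IsSignature G σ)
    (hval : ∀ u v, G.Adj u v → σ u v ^ p = 1)
    (m : V × rootsOfUnity p ℂ → ℂ) (hm : InAE (liftGraph G σ p) triv m) :
    aeNorm G σ (compress p m) ≤ aeNorm (liftGraph G σ p) triv m := by
  classical
  obtain ⟨n₀, a₀, P₀, Q₀, hadj₀, hrep₀⟩ := hm
  apply le_csInf
  · exact ⟨∑ i, ‖a₀ i‖, ⟨n₀, a₀, P₀, Q₀, hadj₀, hrep₀, rfl⟩⟩
  rintro s ⟨n, a, P, Q, hadj, hrep, hsum⟩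
  have hor : ∀ i, (G.Adj (P i).1 (Q i).1 ∧
      (((Q i).2 : ℂˣ) : ℂ) = (((P i).2 : ℂˣ) : ℂ) * σ (P i).1 (Q i).1) ∨
      (G.Adj (Q i).1 (P i).1 ∧
      (((P i).2 : ℂˣ) : ℂ) = (((Q i).2 : ℂˣ) : ℂ) * σ (Q i).1 (P i).1) := by
    intro i
    have h := hadj i
    rw [liftGraph, SimpleGraph.fromRel_adj] at h
    exact h.2
  set c : Fin n → Prop := fun i => G.Adj (P i).1 (Q i).1 ∧
      (((Q i).2 : ℂˣ) : ℂ) = (((P i).2 : ℂˣ) : ℂ) * σ (P i).1 (Q i).1 with hc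
  set b : Fin n → ℂ := fun i =>
    if c i then a i * (((P i).2 : ℂˣ) : ℂ) else -(a i * (((Q i).2 : ℂˣ) : ℂ)) with hb
  set p' : Fin n → V := fun i => if c i then (P i).1 else (Q i).1 with hp'
  set q' : Fin n → V := fun i => if c i then (Q i).1 else (P i).1 with hq'
  have hadj' : ∀ i, G.Adj (p' i) (q' i) := by
    intro i
    by_cases h : c i
    · simp only [hp', hq', if_pos h]
      exact h.1
    · simp only [hp', hq', if_neg h]
      exact ((hor i).resolve_left h).1
  have hrep' : compress p m = ∑ i, b i • atom σ (p' i) (q' i) := by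
    rw [hrep, compress_sum]
    refine Finset.sum_congr rfl fun i _ => ?_
    rw [compress_smul]
    have hPeta : (P i) = ((P i).1, (P i).2) := rfl
    have hQeta : (Q i) = ((Q i).1, (Q i).2) := rfl
    rw [hPeta, hQeta, compress_atom]
    by_cases h : c i
    · rw [key1 σ h.2, smul_smul]
      simp only [hb, hp', hq', if_pos h]
    · have h2 := ((hor i).resolve_left h).2
      rw [key2 σ h2, smul_smul, mul_neg]
      simp only [hb, hp', hq', if_neg h, neg_smul]
  have habs : ∀ i, ‖b i‖ = ‖a i‖ := by
    intro i
    by_cases h : c i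
    · simp only [hb, if_pos h, norm_mul, abs_root, mul_one]
    · simp only [hb, if_neg h, norm_neg, norm_mul, abs_root, mul_one]
  refine csInf_le ⟨0, ?_⟩ ⟨n, b, p', q', hadj', hrep', ?_⟩
  · rintro t ⟨k, d, _, _, _, _, rfl⟩
    positivity
  · rw [hsum]
    exact Finset.sum_congr rfl fun i _ => (habs i).symm


end MagneticGraph
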